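/- For every rotation matrix R ∈ SO(3), ‖ψ(R)‖² = 4|R|_I²(1 − |R|_I²); consequently ‖ψ(R)‖ ≤ 2|R|_I. -/
import Mathlib


open Matrix

/-- `R ∈ SO(3)`: `R Rᵀ = I` and `det R = 1`. -/
def IsSO3 (R : Matrix (Fin 3) (Fin 3) ℝ) : Prop := R * Rᵀ = 1 ∧ R.det = 1

/-- `ψ(A) = vex(P_a(A))` where `P_a(A) = (A - Aᵀ)/2`. -/
noncomputable def psi (A : Matrix (Fin 3) (Fin 3) ℝ) : Fin 3 → ℝ :=
  ![(A 2 1 - A 1 2)/2, (A 0 2 - A 2 0)/2, (A 1 0 - A 0 1)/2]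

/-- Squared normalized Euclidean distance on SO(3): `|R|_I² = (1/4) tr(I - R)`. -/
noncomputable def distI2 (R : Matrix (Fin 3) (Fin 3) ℝ) : ℝ :=
  (1/4) * Matrix.trace (1 - R)

/-- Euclidean norm on `ℝ³`. -/
noncomputable def vnorm (x : Fin 3 → ℝ) : ℝ := Real.sqrt (x ⬝ᵥ x)

/-- `‖ψ(R)‖² = 4|R|_I²(1 - |R|_I²)`, hence `‖ψ(R)‖ ≤ 2|R|_I`. -/
theorem stmt4 (R : Matrix (Fin 3) (Fin 3) ℝ) (hR : IsSO3 R) :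
    psi R ⬝ᵥ psi R = 4 * distI2 R * (1 - distI2 R) ∧
    vnorm (psi R) ≤ 2 * Real.sqrt (distI2 R) := by
  obtain ⟨h1, h2⟩ := hR
  have hinv : R⁻¹ = Rᵀ := Matrix.inv_eq_right_inv h1
  have hadj : R.adjugate = Rᵀ := by
    have := Matrix.mul_adjugate R
    rw [h2, one_smul] at this
    rw [← Matrix.inv_eq_right_inv this, hinv]
  rw [Matrix.adjugate_fin_three] at hadj
  have c00 := congrFun (congrFun hadj 0) 0
  have c11 := congrFun (congrFun hadj 1) 1
  have c22 := congrFun (congrFun hadj 2) 2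
  simp [Matrix.transpose_apply] at c00 c11 c22
  have d0 := congrFun (congrFun h1 0) 0
  have d1 := congrFun (congrFun h1 1) 1
  have d2 := congrFun (congrFun h1 2) 2
  simp [Matrix.mul_apply, Fin.sum_univ_three, Matrix.one_apply] at d0 d1 d2
  have key : psi R ⬝ᵥ psi R = 4 * distI2 R * (1 - distI2 R) := by
    simp only [psi, distI2, dotProduct, Fin.sum_univ_three, Matrix.trace,
      Matrix.diag, Fin.sum_univ_three, Matrix.sub_apply, Matrix.one_apply_eq,
      Matrix.cons_val_zero, Matrix.cons_val_one, Matrix.head_cons,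
      Matrix.cons_val_two, Matrix.tail_cons]
    nlinarith [c00, c11, c22, d0, d1, d2]
  refine ⟨key, ?_⟩
  have hle : psi R ⬝ᵥ psi R ≤ 4 * distI2 R := by nlinarith [sq_nonneg (distI2 R)]
  calc vnorm (psi R) = Real.sqrt (psi R ⬝ᵥ psi R) := rfl
    _ ≤ Real.sqrt (4 * distI2 R) := Real.sqrt_le_sqrt hle
    _ = 2 * Real.sqrt (distI2 R) := by
        rw [Real.sqrt_mul (by norm_num)]
        rw [show (4:ℝ) = 2^2 by norm_num, Real.sqrt_sq (by norm_num : (0:ℝ) ≤ 2)]
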